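/- For integers n ≥ k ≥ 1, the number of restricted growth sequences of length n with maximal letter k having exactly k fixed points equals k^{n−k}; that is, |{π ∈ R_{n,k} : F_π = k}| = k^{n−k}. -/
import Mathlib


open Finset
open scoped Classical

/-- `π : Fin n → ℕ` is a restricted growth sequence (entries are positive, the first entry
is `1`, and each entry exceeds the maximum of the previous entries by at most `1`;
equivalently `π₁ = 1` and `π_{j+1} ≤ 1 + max {π₁, …, π_j}`). -/
def IsRGS {n : ℕ} (π : Fin n → ℕ) : Prop :=
  ∀ i : Fin n, 1 ≤ π i ∧ π i ≤ (Finset.univ.filter (fun j : Fin n => j < i)).sup π + 1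

/-- The (finite) set `R_n` of restricted growth sequences of length `n`
(all such sequences take values in `{1, …, n}`). -/
noncomputable def RGS (n : ℕ) : Finset (Fin n → ℕ) :=
  (Fintype.piFinset fun _ : Fin n => Finset.Icc 1 n).filter IsRGS

/-- The (finite) set `R_{n,k}` of restricted growth sequences of length `n`
with maximal letter `k`. -/
noncomputable def RGSk (n k : ℕ) : Finset (Fin n → ℕ) :=
  (RGS n).filter (fun π => Finset.univ.sup π = k)

/-- `F_π`: the number of fixed points of `π`, i.e. (1-indexed) positions `i` with `π_i = i`. -/
def fixCount {n : ℕ} (π : Fin n → ℕ) : ℕ :=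
  (Finset.univ.filter (fun i : Fin n => π i = (i : ℕ) + 1)).card

lemma card_filter_coe_lt (n k : ℕ) (hkn : k ≤ n) :
    (Finset.univ.filter (fun i : Fin n => (i : ℕ) < k)).card = k := by
  have : (Finset.univ.filter (fun i : Fin n => (i : ℕ) < k)) =
      (Finset.univ : Finset (Fin k)).map ⟨Fin.castLE hkn, Fin.castLE_injective hkn⟩ := by
    ext i
    simp only [Finset.mem_filter, Finset.mem_univ, true_and, Finset.mem_map,
      Function.Embedding.coeFn_mk]
    constructor
    · intro hi; exact ⟨⟨(i : ℕ), hi⟩, by ext; simp⟩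
    · rintro ⟨a, rfl⟩; simp [a.isLt]
  rw [this]; simp

theorem rgs_count_k_fixed_points (n k : ℕ) (hk : 1 ≤ k) (hkn : k ≤ n) :
    ((RGSk n k).filter (fun π => fixCount π = k)).card = k ^ (n - k) := by
  classical
  have hcardlt := card_filter_coe_lt n k hkn
  set T : Fin n → Finset ℕ :=
    fun i => if (i : ℕ) < k then {(i : ℕ) + 1} else Finset.Icc 1 k with hT
  have hset : ((RGSk n k).filter (fun π => fixCount π = k)) = Fintype.piFinset T := by
    ext π
    simp only [RGSk, RGS, Finset.mem_filter, Fintype.mem_piFinset, Finset.mem_Icc, hT]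
    constructor
    · rintro ⟨⟨⟨hIcc, hrgs⟩, hsup⟩, hfix⟩
      have hle : ∀ i, π i ≤ k := fun i => hsup ▸ Finset.le_sup (Finset.mem_univ i)
      have hsub : (Finset.univ.filter (fun i : Fin n => π i = (i : ℕ) + 1)) ⊆
          (Finset.univ.filter (fun i : Fin n => (i : ℕ) < k)) := by
        intro i hi
        simp only [Finset.mem_filter, Finset.mem_univ, true_and] at hi ⊢
        have := hle i; omega
      have hfix' : (Finset.univ.filter (fun i : Fin n => π i = (i : ℕ) + 1)).card = k := hfix
      have heq := Finset.eq_of_subset_of_card_le hsub (by omega)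
      intro i
      by_cases hik : (i : ℕ) < k
      · have : i ∈ (Finset.univ.filter (fun i : Fin n => (i : ℕ) < k)) := by
          simp [hik]
        rw [← heq] at this
        simp only [Finset.mem_filter, Finset.mem_univ, true_and] at this
        simp [hik, this]
      · have h1 := (hrgs i).1
        have h2 := hle i
        simp [hik, h1, h2]
    · intro hTi
      have hlow : ∀ i : Fin n, (i : ℕ) < k → π i = (i : ℕ) + 1 := by
        intro i hi; have := hTi i; simp [hi] at this; exact this
      have hhigh : ∀ i : Fin n, ¬ (i : ℕ) < k → 1 ≤ π i ∧ π i ≤ k := by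
        intro i hi; have := hTi i; simpa [hi] using this
      have h1 : ∀ i : Fin n, 1 ≤ π i := by
        intro i
        by_cases hi : (i : ℕ) < k
        · rw [hlow i hi]; omega
        · exact (hhigh i hi).1
      have hlek : ∀ i : Fin n, π i ≤ k := by
        intro i
        by_cases hi : (i : ℕ) < k
        · rw [hlow i hi]; omega
        · exact (hhigh i hi).2
      have hrgs : IsRGS π := by
        intro i
        refine ⟨h1 i, ?_⟩
        by_cases hi0 : (i : ℕ) = 0
        · have : π i = 1 := by rw [hlow i (by omega)]; omega
          omega
        · set m : ℕ := min ((i : ℕ) - 1) (k - 1) with hm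
          have hmn : m < n := by
            have := i.isLt; omega
          set j0 : Fin n := ⟨m, hmn⟩ with hj0
          have hj0lt : j0 < i := by
            rw [Fin.lt_def]; simp [hj0]; omega
          have hj0val : π j0 = m + 1 := by
            have : (j0 : ℕ) < k := by simp [hj0]; omega
            rw [hlow j0 this]
          have hsup : m + 1 ≤ (Finset.univ.filter (fun j : Fin n => j < i)).sup π := by
            rw [← hj0val]
            exact Finset.le_sup (by simp [hj0lt])
          have hpi : π i ≤ m + 2 := by
            by_cases hik : (i : ℕ) < k
            · rw [hlow i hik]; omega
            · have := hlek i; omega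
          omega
      have hsupk : Finset.univ.sup π = k := by
        apply le_antisymm
        · exact Finset.sup_le fun i _ => hlek i
        · have hkn' : k - 1 < n := by omega
          set j1 : Fin n := ⟨k - 1, hkn'⟩ with hj1
          have : π j1 = k := by
            rw [hlow j1 (by simp [hj1]; omega)]; simp [hj1]; omega
          rw [← this]
          exact Finset.le_sup (Finset.mem_univ _)
      have hfixeq : (Finset.univ.filter (fun i : Fin n => π i = (i : ℕ) + 1)) =
          (Finset.univ.filter (fun i : Fin n => (i : ℕ) < k)) := by
        ext i
        simp only [Finset.mem_filter, Finset.mem_univ, true_and]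
        constructor
        · intro hpi
          by_contra hik
          have := hlek i; omega
        · exact hlow i
      refine ⟨⟨⟨fun i => ?_, hrgs⟩, hsupk⟩, ?_⟩
      · exact ⟨h1 i, le_trans (hlek i) hkn⟩
      · show (Finset.univ.filter (fun i : Fin n => π i = (i : ℕ) + 1)).card = k
        rw [hfixeq, hcardlt]
  rw [hset, Fintype.card_piFinset]
  have hcard : ∀ i : Fin n, (T i).card = if (i : ℕ) < k then 1 else k := by
    intro i
    by_cases hi : (i : ℕ) < k <;> simp [hT, hi, Nat.card_Icc]
  calc (∏ i : Fin n, (T i).card) = ∏ i : Fin n, (if (i : ℕ) < k then 1 else k) := by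
        exact Finset.prod_congr rfl fun i _ => hcard i
    _ = k ^ (n - k) := by
        rw [Finset.prod_ite]
        simp only [Finset.prod_const, one_pow, one_mul]
        congr 1
        have hadd := Finset.card_filter_add_card_filter_not
          (s := (Finset.univ : Finset (Fin n))) (p := fun i : Fin n => (i : ℕ) < k)
        simp only [Finset.card_univ, Fintype.card_fin] at hadd
        omega
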